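/- Let q' : B' → B and q'' : B'' → B be homomorphisms of commutative rings with q'' surjective, let P = B' ×_B B'' be the fiber product ring with projections p₁ : P → B' and p₂ : P → B'', and regard B' and B'' as P-algebras via p₁ and p₂. Then the natural ring homomorphism B' ⊗_P B'' → B induced by the P-bilinear map (b', b'') ↦ q'(b') · q''(b'') is an isomorphism of rings. -/

import Mathlib

open scoped TensorProduct

/-- The fiber product `B' ×_B B''` of two ring homomorphisms `q' : B' → B` and
`q'' : B'' → B`, as the subring of `B' × B''` of pairs `(b', b'')` with `q' b' = q'' b''`. -/
def fiberProduct {B B' B'' : Type*} [CommRing B] [CommRing B'] [CommRing B'']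
    (q' : B' →+* B) (q'' : B'' →+* B) : Subring (B' × B'') :=
  RingHom.eqLocus (q'.comp (RingHom.fst B' B'')) (q''.comp (RingHom.snd B' B''))

set_option maxHeartbeats 1000000 in
set_option synthInstance.maxHeartbeats 400000 in
/-- For `q' : B' → B`, `q'' : B'' → B` ring homomorphisms with `q''` surjective, and
`P = B' ×_B B''` the fiber product with projections `p₁, p₂`, regarding `B'` and `B''` as
`P`-algebras via `p₁` and `p₂`, the natural ring homomorphism `B' ⊗_P B'' → B` induced by
`(b', b'') ↦ q'(b') · q''(b'')` is an isomorphism of rings. -/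
theorem fiberProduct_tensor_iso {B B' B'' : Type*} [CommRing B] [CommRing B'] [CommRing B'']
    (q' : B' →+* B) (q'' : B'' →+* B) (hq'' : Function.Surjective q'') :
    letI : Algebra (fiberProduct q' q'') B' :=
      ((RingHom.fst B' B'').comp (fiberProduct q' q'').subtype).toAlgebra
    letI : Algebra (fiberProduct q' q'') B'' :=
      ((RingHom.snd B' B'').comp (fiberProduct q' q'').subtype).toAlgebra
    ∃ e : TensorProduct (fiberProduct q' q'') B' B'' ≃+* B,
      ∀ (b' : B') (b'' : B''), e (b' ⊗ₜ b'') = q' b' * q'' b'' := by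
  letI : Algebra (fiberProduct q' q'') B' :=
    ((RingHom.fst B' B'').comp (fiberProduct q' q'').subtype).toAlgebra
  letI : Algebra (fiberProduct q' q'') B'' :=
    ((RingHom.snd B' B'').comp (fiberProduct q' q'').subtype).toAlgebra
  letI : Algebra (fiberProduct q' q'') B :=
    (q'.comp ((RingHom.fst B' B'').comp (fiberProduct q' q'').subtype)).toAlgebra
  show ∃ e : TensorProduct (fiberProduct q' q'') B' B'' ≃+* B,
      ∀ (b' : B') (b'' : B''), e (b' ⊗ₜ b'') = q' b' * q'' b''
  have hP : ∀ p : fiberProduct q' q'', q' p.1.1 = q'' p.1.2 := fun p => p.2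
  -- smul descriptions
  have s1 : ∀ (p : fiberProduct q' q'') (x : B'), p • x = p.1.1 * x := fun p x => by
    rw [Algebra.smul_def]; rfl
  have s2 : ∀ (p : fiberProduct q' q'') (y : B''), p • y = p.1.2 * y := fun p y => by
    rw [Algebra.smul_def]; rfl
  have tsw : ∀ (p : fiberProduct q' q'') (x : B') (y : B''),
      (p • x) ⊗ₜ[fiberProduct q' q''] y = x ⊗ₜ[fiberProduct q' q''] (p • y) := fun p x y =>
    TensorProduct.smul_tmul p x y
  let q'a : B' →ₐ[fiberProduct q' q''] B := { q' with commutes' := fun p => rfl }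
  let q''a : B'' →ₐ[fiberProduct q' q''] B := { q'' with commutes' := fun p => (hP p).symm }
  let f : TensorProduct (fiberProduct q' q'') B' B'' →ₐ[fiberProduct q' q''] B :=
    Algebra.TensorProduct.productMap q'a q''a
  have hf : ∀ (b' : B') (b'' : B''), f (b' ⊗ₜ b'') = q' b' * q'' b'' := fun b' b'' => by
    simp [f, q'a, q''a]; rfl
  have key : ∀ x : TensorProduct (fiberProduct q' q'') B' B'',
      ∃ b'' : B'', x = (1 : B') ⊗ₜ[fiberProduct q' q''] b'' := by
    intro x
    induction x using TensorProduct.induction_on with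
    | zero => exact ⟨0, by simp⟩
    | tmul b' b'' =>
      obtain ⟨c'', hc⟩ := hq'' (q' b')
      have hp : (b', c'') ∈ fiberProduct q' q'' := hc.symm
      set p : fiberProduct q' q'' := ⟨(b', c''), hp⟩
      refine ⟨c'' * b'', ?_⟩
      have h1 : b' = p • (1 : B') := by rw [s1]; simp; rfl
      have h2 : p • b'' = c'' * b'' := by rw [s2]
      rw [h1, tsw, h2]
    | add x y hx hy =>
      obtain ⟨a, ha⟩ := hx
      obtain ⟨b, hb⟩ := hy
      exact ⟨a + b, by rw [ha, hb, TensorProduct.tmul_add]⟩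
  have hsurj : Function.Surjective f := by
    intro b
    obtain ⟨b'', hb⟩ := hq'' b
    exact ⟨(1 : B') ⊗ₜ b'', by rw [hf]; simp [hb]⟩
  have hinj : Function.Injective f := by
    rw [injective_iff_map_eq_zero]
    intro x hx
    obtain ⟨b'', rfl⟩ := key x
    rw [hf] at hx
    simp only [map_one, one_mul] at hx
    have hp : ((0 : B'), b'') ∈ fiberProduct q' q'' := by
      show q' 0 = q'' b''
      rw [hx, map_zero]
    set p : fiberProduct q' q'' := ⟨(0, b''), hp⟩
    have h1 : b'' = p • (1 : B'') := by rw [s2]; simp; rfl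
    have h2 : p • (1 : B') = 0 := by rw [s1]; simp; rfl
    rw [h1, ← tsw, h2, TensorProduct.zero_tmul]
  exact ⟨RingEquiv.ofBijective f ⟨hinj, hsurj⟩, hf⟩
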